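/- Fix P₀ > 0 and P_c > 0, set X₃ = X₀² + 4X₀X₂ + 16X₂², and suppose the quantity P_LO* = 2a₁₂P₀(a₂₃P_c + a₁₂P₀)·(√X₃ − X₀ − 2X₂)/(6a₃₄X₂²) is strictly positive. Then the DIOD direct-current-shot-noise objective f(P_LO) = P₁(P_LO)·κ₁(P_LO)², viewed as a function of the local-oscillator power P_LO on (0, ∞), has derivative zero at P_LO = P_LO*; i.e., P_LO* is a stationary point of P₁κ₁². -/

import Mathlib

open Set

/-- `X₁ = 2a₁₂²P₀² + 2a₁₂P₀(a₃₄P_LO + a₂₃P_c) + γ₂²a₃₄P_LO`. -/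
noncomputable def X1fun (a12 a23 a34 γ2 P0 Pc PLO : ℝ) : ℝ :=
  2 * a12 ^ 2 * P0 ^ 2 + 2 * a12 * P0 * (a34 * PLO + a23 * Pc) + γ2 ^ 2 * a34 * PLO

/-- Transmitted probe power `P₁ = P₀·exp(−X₀a₃₄P_LO/X₁)` at zero detuning. -/
noncomputable def P1fun (a12 a23 a34 γ2 X0 P0 Pc PLO : ℝ) : ℝ :=
  P0 * Real.exp (-(X0 * a34 * PLO) / X1fun a12 a23 a34 γ2 P0 Pc PLO)

/-- RF-to-optical slope `κ₁ = C₀·√(a₃₄P_LO)·a₁₂P₀·(a₂₃P_c + a₁₂P₀)/X₁²`. -/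
noncomputable def κ1fun (a12 a23 a34 γ2 C0 P0 Pc PLO : ℝ) : ℝ :=
  C0 * Real.sqrt (a34 * PLO) * (a12 * P0) * (a23 * Pc + a12 * P0)
    / (X1fun a12 a23 a34 γ2 P0 Pc PLO) ^ 2

/-- `X₂ = 2a₁₂P₀ + γ₂²`. -/
noncomputable def X2fun (a12 γ2 P0 : ℝ) : ℝ := 2 * a12 * P0 + γ2 ^ 2

/-- Key algebraic fact: the claimed stationary point satisfies the stationarity polynomial. -/
lemma key_aux (A B X0 X2 a34 S p : ℝ) (hX2 : X2 ≠ 0) (ha34 : a34 ≠ 0)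
    (hS : S ^ 2 = X0 ^ 2 + 4 * X0 * X2 + 16 * X2 ^ 2)
    (hp : p = 2 * A * B * (S - X0 - 2 * X2) / (6 * a34 * X2 ^ 2)) :
    (2 * A * B) ^ 2 - 2 * (2 * A * B) * (X2 * a34 * p) - 3 * (X2 * a34 * p) ^ 2
      - (X0 * a34) * (2 * A * B) * p = 0 := by
  subst hp
  field_simp
  linear_combination (-12 * A ^ 2 * B ^ 2) * hS

/-- Abstract derivative computation: if the stationarity polynomial vanishes at `p`,
then `P₀·exp(−Kp/(c+mp))·(Ep/(c+mp)⁴)` has derivative zero at `p`. -/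
lemma deriv_aux (c m E P0 K p : ℝ) (hu : c + m * p ≠ 0)
    (hkey : c ^ 2 - 2 * c * (m * p) - 3 * (m * p) ^ 2 - K * c * p = 0) :
    HasDerivAt (fun P : ℝ => P0 * Real.exp (-(K * P) / (c + m * P)) * (E * P / (c + m * P) ^ 4))
      0 p := by
  have hX1 : HasDerivAt (fun P : ℝ => c + m * P) m p := by
    simpa using ((hasDerivAt_id p).const_mul m).const_add c
  have hnum : HasDerivAt (fun P : ℝ => -(K * P)) (-K) p := by
    simpa using ((hasDerivAt_id p).const_mul K).fun_neg
  have hquot := hnum.fun_div hX1 hu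
  have hexp := hquot.exp
  have hP1 := hexp.const_mul P0
  have hpow := hX1.fun_pow 4
  have hEn : HasDerivAt (fun P : ℝ => E * P) E p := by
    simpa using (hasDerivAt_id p).const_mul E
  have hne4 : (c + m * p) ^ 4 ≠ 0 := pow_ne_zero _ hu
  have hr := hEn.fun_div hpow hne4
  have hg := hP1.fun_mul hr
  convert hg using 1
  · rfl
  · rfl
  field_simp
  ring_nf
  linear_combination (-(P0 * E * Real.exp (-(K * p * (p * m + c)⁻¹)) * (c + m * p) ^ 2 * ((c + m * p) ^ 8)⁻¹)) * hkey

theorem diod_dc_shot_noise_stationary_LO_power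
    (a12 a23 a34 γ2 X0 C0 : ℝ)
    (ha12 : 0 < a12) (ha23 : 0 < a23) (ha34 : 0 < a34) (hγ2 : 0 < γ2)
    (hX0 : 0 < X0) (hC0 : 0 < C0)
    (P0 Pc : ℝ) (hP0 : 0 < P0) (hPc : 0 < Pc)
    (X3 : ℝ)
    (hX3 : X3 = X0 ^ 2 + 4 * X0 * X2fun a12 γ2 P0 + 16 * (X2fun a12 γ2 P0) ^ 2)
    (PLOstar : ℝ)
    (hPLOstar : PLOstar =
      2 * a12 * P0 * (a23 * Pc + a12 * P0)
        * (Real.sqrt X3 - X0 - 2 * X2fun a12 γ2 P0)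
        / (6 * a34 * (X2fun a12 γ2 P0) ^ 2))
    (hpos : 0 < PLOstar) :
    HasDerivAt
      (fun PLO => P1fun a12 a23 a34 γ2 X0 P0 Pc PLO
        * (κ1fun a12 a23 a34 γ2 C0 P0 Pc PLO) ^ 2)
      0 PLOstar := by
  have hX2pos : 0 < X2fun a12 γ2 P0 := by unfold X2fun; positivity
  have hS2 : Real.sqrt X3 ^ 2 = X3 := Real.sq_sqrt (by rw [hX3]; positivity)
  have hkey := key_aux (a12 * P0) (a23 * Pc + a12 * P0) X0 (X2fun a12 γ2 P0) a34
      (Real.sqrt X3) PLOstar (ne_of_gt hX2pos) (ne_of_gt ha34)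
      (by rw [hS2, hX3]) (by rw [hPLOstar]; ring)
  have hu : 2 * (a12 * P0) * (a23 * Pc + a12 * P0) + X2fun a12 γ2 P0 * a34 * PLOstar ≠ 0 := by
    positivity
  have hkey' : (2 * (a12 * P0) * (a23 * Pc + a12 * P0)) ^ 2
      - 2 * (2 * (a12 * P0) * (a23 * Pc + a12 * P0)) * (X2fun a12 γ2 P0 * a34 * PLOstar)
      - 3 * (X2fun a12 γ2 P0 * a34 * PLOstar) ^ 2
      - (X0 * a34) * (2 * (a12 * P0) * (a23 * Pc + a12 * P0)) * PLOstar = 0 := by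
    linear_combination hkey
  have hd := deriv_aux (2 * (a12 * P0) * (a23 * Pc + a12 * P0)) (X2fun a12 γ2 P0 * a34)
      (C0 ^ 2 * a34 * (a12 * P0) ^ 2 * (a23 * Pc + a12 * P0) ^ 2) P0 (X0 * a34) PLOstar hu hkey'
  refine hd.congr_of_eventuallyEq ?_
  filter_upwards [isOpen_Ioi.mem_nhds (show PLOstar ∈ Set.Ioi (0 : ℝ) from hpos)] with P hP
  have hPgt : (0 : ℝ) < P := hP
  have hs : Real.sqrt (a34 * P) ^ 2 = a34 * P := Real.sq_sqrt (by positivity)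
  have hX1eq : X1fun a12 a23 a34 γ2 P0 Pc P
      = 2 * (a12 * P0) * (a23 * Pc + a12 * P0) + X2fun a12 γ2 P0 * a34 * P := by
    unfold X1fun X2fun; ring
  have hnum : (C0 * Real.sqrt (a34 * P) * (a12 * P0) * (a23 * Pc + a12 * P0)) ^ 2
      = C0 ^ 2 * a34 * (a12 * P0) ^ 2 * (a23 * Pc + a12 * P0) ^ 2 * P := by
    linear_combination (C0 ^ 2 * (a12 * P0) ^ 2 * (a23 * Pc + a12 * P0) ^ 2) * hs
  unfold P1fun κ1fun
  rw [hX1eq, div_pow, hnum]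
  ring
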